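/- Let H and K be complex inner product spaces with dim(H) ≥ 2, and let T : H → K be a real-linear isometry preserving orthogonality. Suppose there exists a norm-one element x₀ ∈ H with T(i x₀) = i s₀ T(x₀) for some s₀ ∈ {1, -1}. Then T(i x) = i s₀ T(x) for every x ∈ H; in particular every non-zero vector of H is of pure complex type for T with the same sign s₀. -/

import Mathlib

open scoped ComplexInnerProductSpace

/-- If a real-linear isometry `T` preserving orthogonality between complex inner
product spaces (`dim H ≥ 2`) has one norm-one point `x₀` of pure complex type,
`T(i x₀) = i s₀ T(x₀)` with `s₀ ∈ {1, -1}`, then `T(i x) = i s₀ T(x)` for all `x`. -/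
theorem pure_complex_type_everywhere
    {H K : Type*} [NormedAddCommGroup H] [InnerProductSpace ℂ H]
    [NormedAddCommGroup K] [InnerProductSpace ℂ K]
    (hdim : 2 ≤ Module.rank ℂ H)
    (T : H → K)
    (hadd : ∀ x y, T (x + y) = T x + T y)
    (hsmul : ∀ (r : ℝ) (x : H), T (r • x) = r • T x)
    (hiso : ∀ x, ‖T x‖ = ‖x‖)
    (hop : ∀ x y : H, ⟪x, y⟫ = 0 → ⟪T x, T y⟫ = 0)
    (x₀ : H) (hx₀ : ‖x₀‖ = 1)
    (s₀ : ℝ) (hs₀ : s₀ = 1 ∨ s₀ = -1)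
    (hpure : T (Complex.I • x₀) = (Complex.I * (s₀ : ℂ)) • T x₀) :
    ∀ x : H, T (Complex.I • x) = (Complex.I * (s₀ : ℂ)) • T x := by
  have hs2 : (s₀ : ℂ) * (s₀ : ℂ) = 1 := by
    rcases hs₀ with h | h <;> norm_num [h]
  have hsub : ∀ x y : H, T (x - y) = T x - T y := by
    intro x y
    have hneg : T (-y) = -T y := by
      have := hsmul (-1) y; simpa using this
    rw [sub_eq_add_neg, hadd, hneg, sub_eq_add_neg]
  set P : H → Prop := fun x => T (Complex.I • x) = (Complex.I * (s₀ : ℂ)) • T x with hP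
  have Padd : ∀ x y, P x → P y → P (x + y) := by
    intro x y hx hy
    simp only [hP] at hx hy
    simp only [hP, smul_add, hadd, hx, hy]
  have Prsmul : ∀ (r : ℝ) (x : H), P x → P (r • x) := by
    intro r x hx
    simp only [hP] at hx ⊢
    rw [smul_comm, hsmul, hx, hsmul, smul_comm]
  have PIsmul : ∀ x, P x → P (Complex.I • x) := by
    intro x hx
    simp only [hP] at hx ⊢
    have h1 : Complex.I • Complex.I • x = ((-1 : ℝ)) • x := by
      rw [smul_smul, Complex.I_mul_I, ← algebraMap_smul ℂ (-1 : ℝ) x]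
      norm_num
    rw [h1, hsmul, hx, smul_smul]
    have : Complex.I * (s₀ : ℂ) * (Complex.I * (s₀ : ℂ)) = -1 := by
      have : Complex.I * (s₀ : ℂ) * (Complex.I * (s₀ : ℂ))
          = (Complex.I * Complex.I) * ((s₀ : ℂ) * (s₀ : ℂ)) := by ring
      rw [this, Complex.I_mul_I, hs2]; ring
    rw [this]
    simp
  have Pcsmul : ∀ (c : ℂ) (x : H), P x → P (c • x) := by
    intro c x hx
    have hdec : c • x = (c.re : ℝ) • x + (c.im : ℝ) • (Complex.I • x) := by
      rw [← algebraMap_smul ℂ c.re x, ← algebraMap_smul ℂ c.im (Complex.I • x),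
        smul_smul]
      rw [← add_smul]
      congr 1
      simp [Complex.ext_iff]
    rw [hdec]
    exact Padd _ _ (Prsmul _ _ hx) (Prsmul _ _ (PIsmul _ hx))
  have P0 : P 0 := by
    have hT0 : T 0 = 0 := by
      have := hsmul 0 0; simpa using this
    simp only [hP, smul_zero, hT0]
  -- main step: unit vectors orthogonal to x₀ are pure
  have Portho : ∀ y : H, ⟪x₀, y⟫ = 0 → ‖y‖ = 1 → P y := by
    intro y hy hny
    have hy' : ⟪y, x₀⟫ = 0 := by
      rw [← inner_conj_symm, hy, map_zero]
    have hx₀self : ⟪x₀, x₀⟫ = 1 := by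
      rw [inner_self_eq_norm_sq_to_K, hx₀]; norm_num
    have hyself : ⟪y, y⟫ = 1 := by
      rw [inner_self_eq_norm_sq_to_K, hny]; norm_num
    have horth : ⟪x₀ - Complex.I • y, Complex.I • x₀ - y⟫ = 0 := by
      simp only [inner_sub_left, inner_sub_right, inner_smul_left, inner_smul_right,
        hy, hy', hx₀self, hyself, Complex.conj_I]
      ring
    have h2 := hop _ _ horth
    rw [hsub, hsub, hpure] at h2
    -- abbreviations
    set a := T x₀ with ha
    set b := T y with hb
    set u := T (Complex.I • y) with hu
    have haa : ⟪a, a⟫ = 1 := by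
      rw [inner_self_eq_norm_sq_to_K, hiso, hx₀]; norm_num
    have hbb : ⟪b, b⟫ = 1 := by
      rw [inner_self_eq_norm_sq_to_K, hiso, hny]; norm_num
    have huu : ⟪u, u⟫ = 1 := by
      rw [inner_self_eq_norm_sq_to_K, hiso]
      rw [norm_smul]
      simp [hny]
    have hab : ⟪a, b⟫ = 0 := hop x₀ y hy
    have hau : ⟪a, u⟫ = 0 := by
      refine hop x₀ (Complex.I • y) ?_
      rw [inner_smul_right, hy, mul_zero]
    have hua : ⟪u, a⟫ = 0 := by
      rw [← inner_conj_symm, hau, map_zero]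
    -- expand h2 to get ⟪u, b⟫ = -(I * s₀)
    have hub : ⟪u, b⟫ = -(Complex.I * (s₀ : ℂ)) := by
      rw [inner_sub_left, inner_sub_right, inner_sub_right, inner_smul_right,
        inner_smul_right, haa, hab, hua] at h2
      rw [← sub_eq_zero, ← h2]
      ring
    have hbu : ⟪b, u⟫ = Complex.I * (s₀ : ℂ) := by
      rw [← inner_conj_symm, hub]
      simp [Complex.conj_I]
    -- Cauchy–Schwarz equality via norm computation
    have hz : ⟪u - (Complex.I * (s₀ : ℂ)) • b, u - (Complex.I * (s₀ : ℂ)) • b⟫ = 0 := by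
      simp only [inner_sub_left, inner_sub_right, inner_smul_left, inner_smul_right,
        huu, hbb, hub, hbu, map_mul, Complex.conj_I, Complex.conj_ofReal]
      ring_nf
      rw [Complex.I_sq]
      linear_combination -hs2
    have := inner_self_eq_zero.mp hz
    have h3 : u = (Complex.I * (s₀ : ℂ)) • b := by
      rwa [sub_eq_zero] at this
    exact h3
  -- conclude for arbitrary x
  intro x
  have hx₀self : ⟪x₀, x₀⟫ = 1 := by
    rw [inner_self_eq_norm_sq_to_K, hx₀]; norm_num
  set c := ⟪x₀, x⟫ with hc
  set y := x - c • x₀ with hydef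
  have hy : ⟪x₀, y⟫ = 0 := by
    rw [hydef, inner_sub_right, inner_smul_right, hx₀self, mul_one, hc, sub_self]
  have hPy : P y := by
    by_cases h0 : y = 0
    · rw [h0]; exact P0
    · have h1 : P (‖y‖⁻¹ • y) := by
        refine Portho _ ?_ (norm_smul_inv_norm h0)
        rw [← algebraMap_smul ℂ (‖y‖⁻¹) y, inner_smul_right, hy, mul_zero]
      have h2 := Prsmul (‖y‖) _ h1
      rwa [smul_smul, mul_inv_cancel₀ (norm_ne_zero_iff.mpr h0), one_smul] at h2
  have hx : x = c • x₀ + y := by rw [hydef]; abel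
  have := Padd _ _ (Pcsmul c x₀ hpure) hPy
  rwa [← hx] at this
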